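/- Let 1/9 < α < 1, (ξ,η) in the interior of the hexagon with η = ξ/2. Then Π_α(s) = (s+√α)²·[(s-z_+)(s-z_-) - η²(s-√α)²], so s = -√α is a zero of Π_α of multiplicity at least 2. -/

import Mathlib

/-- For `1/9 < α < 1` and `(ξ,η)` in the open hexagon with `η = ξ/2`, the polynomial
`Π_α(s)` factors as `(s+√α)²·[(s-z_+)(s-z_-) - η²(s-√α)²]`, where
`(s-z_+)(s-z_-) = s² + ((3-2√α+3α)/4)s + α`; in particular `s = -√α` is a zero of
multiplicity at least 2. -/
theorem Pi_alpha_factorization_on_diagonal (α ξ η : ℝ) (hα1 : 1/9 < α) (hα2 : α < 1)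
    (hξ1 : -1 < ξ) (hξ2 : ξ < 1) (hη1 : -1 < η) (hη2 : η < 1)
    (hd1 : -1 < η - ξ) (hd2 : η - ξ < 1) (hdiag : η = ξ/2) :
    let Pa : ℝ → ℝ := fun s =>
      (s + Real.sqrt α)^2 * (s^2 + ((3 - 2*Real.sqrt α + 3*α)/4)*s + α)
        - (η*(s+1)*(s+α) - ξ*s*(s+(1+α)/2))^2
    (∀ s : ℝ, Pa s = (s + Real.sqrt α)^2 *
        ((s^2 + ((3 - 2*Real.sqrt α + 3*α)/4)*s + α) - η^2*(s - Real.sqrt α)^2)) ∧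
    Pa (-Real.sqrt α) = 0 ∧ deriv Pa (-Real.sqrt α) = 0 := by
  intro Pa
  set r := Real.sqrt α with hrdef
  have hr : r ^ 2 = α := Real.sq_sqrt (by linarith)
  subst hdiag
  have hfact : ∀ s : ℝ, Pa s = (s + r)^2 *
      ((s^2 + ((3 - 2*r + 3*α)/4)*s + α) - (ξ/2)^2*(s - r)^2) := by
    intro s
    show (s + r)^2 * (s^2 + ((3 - 2*r + 3*α)/4)*s + α)
        - ((ξ/2)*(s+1)*(s+α) - ξ*s*(s+(1+α)/2))^2
      = (s + r)^2 * ((s^2 + ((3 - 2*r + 3*α)/4)*s + α) - (ξ/2)^2*(s - r)^2)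
    linear_combination ((ξ/2)^2*(α + r^2 - 2*s^2)) * hr
  set c : ℝ := (3 - 2*r + 3*α)/4 with hc
  have hPa : Pa = fun s => (s + r)^2 * ((s^2 + c*s + α) - (ξ/2)^2*(s - r)^2) :=
    funext hfact
  refine ⟨hfact, ?_, ?_⟩
  · rw [hfact]; ring
  · rw [hPa]
    have hsq : HasDerivAt (fun s : ℝ => (s + r)^2) 0 (-r) := by
      have := ((hasDerivAt_id (-r)).add_const r).fun_pow 2
      simpa using this
    have hH : HasDerivAt (fun s : ℝ => (s^2 + c*s + α) - (ξ/2)^2*(s - r)^2)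
        ((2*(-r) + c) - (ξ/2)^2*(2*(-r - r))) (-r) := by
      have h1 : HasDerivAt (fun s : ℝ => s^2 + c*s + α) (2*(-r) + c) (-r) := by
        have hp := hasDerivAt_pow 2 (-r)
        have hl := ((hasDerivAt_id (-r)).const_mul c)
        have := (hp.add hl).add_const α
        simpa using this
      have h2 : HasDerivAt (fun s : ℝ => (ξ/2)^2*(s - r)^2) ((ξ/2)^2*(2*(-r - r))) (-r) := by
        have := (((hasDerivAt_id (-r)).sub_const r).pow 2).const_mul ((ξ/2)^2)
        simpa [mul_comm] using this
      exact h1.sub h2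
    have := (hsq.fun_mul hH).deriv
    rw [this]; ring
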